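/- Let $F$ be an ordered field with canonical valuation $v$. If a cut $C$ in $F$ is the upper edge $B^+$ of a ball $B$ in $F$, then $B$ is uniquely determined by $C$; likewise for lower edges $B^-$. Moreover, it is impossible that $B_1^+ = B_2^-$ for two balls $B_1, B_2$ in $F$. -/

import Mathlib

open Set

section Cuts
variable {α : Type*} [LinearOrder α]

/-- Cuts `(D, E)` in a linear order `α` are identified with their left parts `D`,
which are exactly the lower sets of `α` (with `E = α \ D`); they are ordered by
inclusion of left parts.  This order is linear. -/
instance : IsTotal (LowerSet α) (· ≤ ·) := by
  constructor
  intro s t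
  by_cases h : (s : Set α) ⊆ (t : Set α)
  · exact Or.inl h
  · refine Or.inr fun x hx => ?_
    obtain ⟨a, ha, hat⟩ := not_subset.mp h
    by_cases hxa : x ≤ a
    · exact s.lower hxa ha
    · exact absurd (t.lower (le_of_not_ge hxa) hx) hat

noncomputable instance : LinearOrder (LowerSet α) :=
  letI := Classical.decEq (LowerSet α)
  letI : DecidableRel ((· ≤ ·) : LowerSet α → LowerSet α → Prop) :=
    fun _ _ => Classical.propDecidable _
  letI : DecidableRel ((· < ·) : LowerSet α → LowerSet α → Prop) :=
    fun _ _ => Classical.propDecidable _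
  Lattice.toLinearOrder _

/-- The interval (order) topology on the set of cuts. -/
instance : TopologicalSpace (LowerSet α) := Preorder.topology _
instance : OrderTopology (LowerSet α) := ⟨rfl⟩

/-- The principal cut `a⁺`, with left part `{x | x ≤ a}`. -/
def upCut (a : α) : LowerSet α := ⟨{x | x ≤ a}, fun _ _ hba ha => le_trans hba ha⟩

/-- The principal cut `a⁻`, with left part `{x | x < a}`. -/
def lowCut (a : α) : LowerSet α := ⟨{x | x < a}, fun _ _ hba ha => lt_of_le_of_lt hba ha⟩

/-- The upper edge `A⁺` of a set `A`: the cut whose left part is the smallest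
initial segment containing `A`. -/
def upperEdge (A : Set α) : LowerSet α :=
  ⟨{x | ∃ a ∈ A, x ≤ a}, fun _ _ hba ⟨c, hc, hac⟩ => ⟨c, hc, hba.trans hac⟩⟩

/-- The lower edge `A⁻` of a set `A`: the cut whose right part is the smallest
final segment containing `A` (given here by its left part). -/
def lowerEdge (A : Set α) : LowerSet α :=
  ⟨{x | ∀ a ∈ A, x < a}, fun _ _ hba ha c hc => lt_of_le_of_lt hba (ha c hc)⟩

end Cuts

section Val
variable {F : Type*} [Field F] [LinearOrder F] [IsStrictOrderedRing F]

/-- `vle a b` encodes `v a ≤ v b` for the canonical (natural) valuation `v` of the ordered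
field `F` (whose valuation ring is the convex hull of `ℤ`): the valuation of `a` is at most
that of `b` iff `|b|` is bounded by an integer multiple of `|a|`.  (`v 0 = ∞` is the largest
value.) -/
def vle (a b : F) : Prop := ∃ n : ℕ, |b| ≤ (n : F) * |a|

/-- `veq a b` encodes `v a = v b`. -/
def veq (a b : F) : Prop := vle a b ∧ vle b a

/-- `vlt a b` encodes `v a < v b`. -/
def vlt (a b : F) : Prop := vle a b ∧ ¬ vle b a

/-- A subset `S ⊆ F` encoding a final segment `S'` of the value group `vF` together with `∞`:
`S = {x | v x ∈ S' ∪ {∞}}`.  Equivalently: `0 ∈ S` and `S` is closed under increasing the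
valuation. -/
def IsValFinalSegment (S : Set F) : Prop :=
  (0 : F) ∈ S ∧ ∀ x ∈ S, ∀ y : F, vle x y → y ∈ S

/-- The ball `B_S(a,F) = {b | v(a-b) ∈ S ∪ {∞}}`, where the final segment `S ∪ {∞}` of
`vF ∪ {∞}` is encoded as a subset of `F` as in `IsValFinalSegment`. -/
def vball (S : Set F) (a : F) : Set F := {b | a - b ∈ S}

/-- A ball in `F` with respect to the canonical valuation. -/
def IsBall (B : Set F) : Prop := ∃ (a : F) (S : Set F), IsValFinalSegment S ∧ B = vball S a

end Val

section Aux
variable {F : Type*} [Field F] [LinearOrder F] [IsStrictOrderedRing F]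

lemma mem_upperEdge' {A : Set F} {x : F} : x ∈ upperEdge A ↔ ∃ a ∈ A, x ≤ a := Iff.rfl

lemma mem_lowerEdge' {A : Set F} {x : F} : x ∈ lowerEdge A ↔ ∀ a ∈ A, x < a := Iff.rfl

lemma vfs_abs_le {S : Set F} (hS : IsValFinalSegment S) {x y : F} (hx : x ∈ S)
    (h : |y| ≤ |x|) : y ∈ S :=
  hS.2 x hx y ⟨1, by simpa using h⟩

lemma vfs_sub_mem {S : Set F} (hS : IsValFinalSegment S) {x y : F} (hx : x ∈ S) (hy : y ∈ S) :
    x - y ∈ S := by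
  rcases le_total |x| |y| with h | h
  · refine hS.2 y hy _ ⟨2, ?_⟩
    push_cast
    have h1 := le_abs_self x; have h2 := neg_abs_le x
    have h3 := le_abs_self y; have h4 := neg_abs_le y
    rw [abs_le]; constructor <;> nlinarith
  · refine hS.2 x hx _ ⟨2, ?_⟩
    push_cast
    have h1 := le_abs_self x; have h2 := neg_abs_le x
    have h3 := le_abs_self y; have h4 := neg_abs_le y
    rw [abs_le]; constructor <;> nlinarith

lemma vfs_half {S : Set F} (hS : IsValFinalSegment S) {d : F} (h : d / 2 ∈ S) : d ∈ S := by
  refine hS.2 _ h d ⟨2, ?_⟩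
  have hd : |d / 2| = |d| / 2 := by rw [abs_div, abs_two]
  rw [hd]; push_cast; linarith [abs_nonneg d]

lemma vball_self {S : Set F} (hS : IsValFinalSegment S) (a : F) : a ∈ vball S a := by
  simpa [vball] using hS.1

lemma vball_diff {S : Set F} (hS : IsValFinalSegment S) {a b c : F}
    (hb : b ∈ vball S a) (hc : c ∈ vball S a) : b - c ∈ S := by
  have := vfs_sub_mem hS hc hb
  simpa using this

lemma vball_add {S : Set F} (hS : IsValFinalSegment S) {a b s : F}
    (hb : b ∈ vball S a) (hs : s ∈ S) : b + s ∈ vball S a := by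
  have : a - (b + s) = (a - b) - s := by ring
  simpa [vball, this] using vfs_sub_mem hS hb hs

lemma vball_convex {S : Set F} (hS : IsValFinalSegment S) {a b c x : F}
    (hb : b ∈ vball S a) (hc : c ∈ vball S a) (h1 : b ≤ x) (h2 : x ≤ c) :
    x ∈ vball S a := by
  have hcb : c - b ∈ S := vball_diff hS hc hb
  have hxb : x - b ∈ S := by
    refine vfs_abs_le hS hcb ?_
    rw [abs_of_nonneg (by linarith), abs_of_nonneg (by linarith)]
    linarith
  have := vball_add hS hb hxb
  simpa using this

lemma upperEdge_subset {B1 B2 : Set F} (h1 : IsBall B1) (h2 : IsBall B2)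
    (h : upperEdge B1 = upperEdge B2) : B1 ⊆ B2 := by
  obtain ⟨a1, S1, hS1, rfl⟩ := h1
  obtain ⟨a2, S2, hS2, rfl⟩ := h2
  intro b1 hb1
  by_contra hb1n
  have hD : ∀ x : F, (∃ b ∈ vball S1 a1, x ≤ b) ↔ (∃ b ∈ vball S2 a2, x ≤ b) := by
    intro x
    constructor
    · intro hx; exact mem_upperEdge'.mp (h ▸ (mem_upperEdge'.mpr hx))
    · intro hx; exact mem_upperEdge'.mp (h.symm ▸ (mem_upperEdge'.mpr hx))
  obtain ⟨c, hc, hbc⟩ := (hD b1).1 ⟨b1, hb1, le_refl _⟩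
  have hlt : ∀ b ∈ vball S2 a2, b1 < b := by
    intro b hb
    by_contra hx
    push_neg at hx
    exact hb1n (vball_convex hS2 hb hc hx hbc)
  have ha2 : a2 ∈ vball S2 a2 := vball_self hS2 a2
  have h12 : b1 < a2 := hlt a2 ha2
  obtain ⟨b1', hb1', hle'⟩ := (hD a2).2 ⟨a2, ha2, le_refl _⟩
  have ha2B1 : a2 ∈ vball S1 a1 := vball_convex hS1 hb1 hb1' h12.le hle'
  have hd1 : a2 - b1 ∈ S1 := by
    have hdiff : b1' - b1 ∈ S1 := vball_diff hS1 hb1' hb1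
    refine vfs_abs_le hS1 hdiff ?_
    rw [abs_of_nonneg (by linarith), abs_of_nonneg (by linarith)]
    linarith
  have hc2 : a2 + (a2 - b1) ∈ vball S1 a1 := vball_add hS1 ha2B1 hd1
  obtain ⟨b2', hb2', hle2⟩ := (hD (a2 + (a2 - b1))).1 ⟨_, hc2, le_refl _⟩
  have hd2 : a2 - b1 ∈ S2 := by
    have hdiff : b2' - a2 ∈ S2 := vball_diff hS2 hb2' ha2
    refine vfs_abs_le hS2 hdiff ?_
    have hlt' : b1 < b2' := hlt b2' hb2'
    rw [abs_of_nonneg (by linarith), abs_of_nonneg (by linarith)]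
    linarith
  exact hb1n hd2

lemma isBall_neg {B : Set F} (h : IsBall B) : IsBall ((fun x : F => -x) ⁻¹' B) := by
  obtain ⟨a, S, hS, rfl⟩ := h
  refine ⟨-a, S, hS, ?_⟩
  ext x
  simp only [Set.mem_preimage, vball, Set.mem_setOf_eq]
  constructor
  · intro hx
    have : -a - x = -(a - -x) := by ring
    rw [this]
    exact hS.2 _ hx _ ⟨1, by push_cast; rw [abs_neg, one_mul]⟩
  · intro hx
    have : a - -x = -(-a - x) := by ring
    rw [this]
    exact hS.2 _ hx _ ⟨1, by push_cast; rw [abs_neg, one_mul]⟩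

lemma mem_upperEdge_neg {B : Set F} {x : F} :
    x ∈ upperEdge ((fun y : F => -y) ⁻¹' B) ↔ ¬ (-x ∈ lowerEdge B) := by
  rw [mem_upperEdge', mem_lowerEdge']
  push_neg
  constructor
  · rintro ⟨y, hy, hxy⟩
    exact ⟨-y, hy, by linarith⟩
  · rintro ⟨b, hb, hbx⟩
    exact ⟨-b, by simpa using hb, by linarith⟩

end Aux

/-- a ball is uniquely determined by its upper edge cut, and by its lower edge
cut; moreover the upper edge of a ball is never the lower edge of a ball. -/
theorem ball_determined_by_edges {F : Type*} [Field F] [LinearOrder F] [IsStrictOrderedRing F] (B1 B2 : Set F)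
    (h1 : IsBall B1) (h2 : IsBall B2) :
    (upperEdge B1 = upperEdge B2 → B1 = B2) ∧
    (lowerEdge B1 = lowerEdge B2 → B1 = B2) ∧
    upperEdge B1 ≠ lowerEdge B2 := by
  constructor
  · intro h
    exact Set.Subset.antisymm (upperEdge_subset h1 h2 h) (upperEdge_subset h2 h1 h.symm)
  constructor
  · intro h
    have hue : upperEdge ((fun y : F => -y) ⁻¹' B1) = upperEdge ((fun y : F => -y) ⁻¹' B2) := by
      apply SetLike.ext
      intro x
      rw [mem_upperEdge_neg, mem_upperEdge_neg, h]
    have hB : ((fun y : F => -y) ⁻¹' B1) = ((fun y : F => -y) ⁻¹' B2) :=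
      Set.Subset.antisymm (upperEdge_subset (isBall_neg h1) (isBall_neg h2) hue)
        (upperEdge_subset (isBall_neg h2) (isBall_neg h1) hue.symm)
    ext x
    have := Set.ext_iff.mp hB (-x)
    simpa using this
  · intro h
    obtain ⟨a1, S1, hS1, rfl⟩ := h1
    obtain ⟨a2, S2, hS2, rfl⟩ := h2
    have hD : ∀ x : F, (∃ b ∈ vball S1 a1, x ≤ b) ↔ (∀ b ∈ vball S2 a2, x < b) := by
      intro x
      constructor
      · intro hx; exact mem_lowerEdge'.mp (h ▸ (mem_upperEdge'.mpr hx))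
      · intro hx; exact mem_upperEdge'.mp (h.symm ▸ (mem_lowerEdge'.mpr hx))
    have ha1 : a1 ∈ vball S1 a1 := vball_self hS1 a1
    have ha2 : a2 ∈ vball S2 a2 := vball_self hS2 a2
    have h12 : a1 < a2 := (hD a1).1 ⟨a1, ha1, le_refl _⟩ a2 ha2
    set d := a2 - a1 with hdd
    have hdpos : 0 < d := by simp [hdd]; linarith
    by_cases hmid : ∃ b ∈ vball S1 a1, a1 + d / 2 ≤ b
    · obtain ⟨b, hb, hmb⟩ := hmid
      have hba : b - a1 ∈ S1 := vball_diff hS1 hb ha1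
      have hhalf : d / 2 ∈ S1 := by
        refine vfs_abs_le hS1 hba ?_
        rw [abs_of_nonneg (by linarith), abs_of_nonneg (by linarith)]
        linarith
      have hdS : d ∈ S1 := vfs_half hS1 hhalf
      have ha2B1 : a2 ∈ vball S1 a1 := by
        have := vball_add hS1 ha1 hdS
        simpa [hdd] using this
      have : a2 < a2 := (hD a2).1 ⟨a2, ha2B1, le_refl _⟩ a2 ha2
      exact absurd this (lt_irrefl a2)
    · push_neg at hmid
      have : ¬ (∀ b ∈ vball S2 a2, a1 + d / 2 < b) := by
        intro hx
        obtain ⟨b, hb, hle⟩ := (hD (a1 + d / 2)).2 hx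
        exact absurd hle (not_le.mpr (hmid b hb))
      push_neg at this
      obtain ⟨b, hb, hble⟩ := this
      have hab : a2 - b ∈ S2 := vball_diff hS2 ha2 hb
      have hhalf : d / 2 ∈ S2 := by
        refine vfs_abs_le hS2 hab ?_
        rw [abs_of_nonneg (by linarith), abs_of_nonneg (by linarith)]
        simp [hdd] at hble ⊢
        linarith
      have hdS : d ∈ S2 := vfs_half hS2 hhalf
      have ha1B2 : a1 ∈ vball S2 a2 := by
        simpa [vball, hdd] using hdS
      have : a1 < a1 := (hD a1).1 ⟨a1, ha1, le_refl _⟩ a1 ha1B2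
      exact absurd this (lt_irrefl a1)
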